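/- Let S be a finite set with at least two elements and let V ⊆ S be a subset that is not a singleton (so that 𝒯(V) is a principal pre-transfer system on S). Then 𝒯(V) is a transfer system on S; that is, there exists an equivalence relation ∼ on the subsets of S such that for every T ⊆ S, T ∈ 𝒯(V) if and only if for every U ⊆ S ∖ T one has U ∼ U ∪ T. -/
import Mathlib


/-- A collection `𝒯` of subsets of `S` is a *transfer system* on `S` if there exists an
equivalence relation `∼` on the subsets of `S` such that for every `T ⊆ S`:
`T ∈ 𝒯` if and only if for every `U ⊆ S ∖ T` one has `U ∼ U ∪ T`. -/
def IsTransferSystem {S : Type*} (𝒯 : Set (Set S)) : Prop :=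
  ∃ r : Set S → Set S → Prop, Equivalence r ∧
    ∀ T : Set S, T ∈ 𝒯 ↔ ∀ U : Set S, U ⊆ Tᶜ → r U (U ∪ T)

/-- A collection `𝒯` of subsets of `S` is a *pre-transfer system* on `S` if:
(i) `∅ ∈ 𝒯`; (ii) whenever `T₁, T₂ ∈ 𝒯` and `T₁ ∩ T₂ ∈ 𝒯`, then `T₁ ∪ T₂ ∈ 𝒯`;
(iii) whenever `T₁, T₂ ⊆ S` are disjoint, `T₁ ∈ 𝒯`, `T₁ ∪ T₂ ∈ 𝒯`, and for every
proper subset `U` of `T₁` either `U ∈ 𝒯` or `T₁ \ U ∈ 𝒯`, then `T₂ ∈ 𝒯`. -/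
def IsPreTransferSystem {S : Type*} (𝒯 : Set (Set S)) : Prop :=
  ∅ ∈ 𝒯 ∧
  (∀ T₁ T₂ : Set S, T₁ ∈ 𝒯 → T₂ ∈ 𝒯 → T₁ ∩ T₂ ∈ 𝒯 → T₁ ∪ T₂ ∈ 𝒯) ∧
  (∀ T₁ T₂ : Set S, Disjoint T₁ T₂ → T₁ ∈ 𝒯 → T₁ ∪ T₂ ∈ 𝒯 →
    (∀ U : Set S, U ⊂ T₁ → U ∈ 𝒯 ∨ T₁ \ U ∈ 𝒯) → T₂ ∈ 𝒯)

/-- For `V ⊆ S`, the collection `𝒯(V) = {∅} ∪ {A ⊆ S : V ⊆ A}`. -/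
def principalSystem {S : Type*} (V : Set S) : Set (Set S) :=
  {A : Set S | A = ∅ ∨ V ⊆ A}

/-- Let `S` be a finite set with at least two elements and `V ⊆ S` a subset that is not
a singleton (so that `𝒯(V)` is a principal pre-transfer system on `S`). Then `𝒯(V)` is
a transfer system on `S`. -/
theorem principalSystem_isTransferSystem {S : Type*} [Finite S]
    (hS : 2 ≤ Nat.card S) (V : Set S) (hV : ¬(∃ v : S, V = {v})) :
    IsTransferSystem (principalSystem V) := by
  classical
  set C : Set S → Prop := fun A => A ∩ V = ∅ ∨ V ⊆ A with hC
  refine ⟨fun A B => A = B ∨ (C A ∧ C B), ⟨fun A => Or.inl rfl, ?_, ?_⟩, ?_⟩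
  · rintro A B (rfl | ⟨h1, h2⟩)
    · exact Or.inl rfl
    · exact Or.inr ⟨h2, h1⟩
  · rintro A B D (rfl | ⟨h1, h2⟩) h
    · exact h
    · rcases h with rfl | ⟨h3, h4⟩
      · exact Or.inr ⟨h1, h2⟩
      · exact Or.inr ⟨h1, h4⟩
  · intro T
    constructor
    · rintro (rfl | hVT)
      · intro U _; left; simp
      · intro U hU
        refine Or.inr ⟨Or.inl ?_, Or.inr (hVT.trans Set.subset_union_right)⟩
        ext x
        simp only [Set.mem_inter_iff, Set.mem_empty_iff_false, iff_false, not_and]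
        intro hxU hxV
        exact hU hxU (hVT hxV)
    · intro h
      by_contra hT
      simp only [principalSystem, Set.mem_setOf_eq, not_or] at hT
      obtain ⟨hTne, hVnT⟩ := hT
      by_cases hVT : V ∩ T = ∅
      · -- take U = {v} with v ∈ V
        have hVne : V ≠ ∅ := by rintro rfl; exact hVnT (Set.empty_subset T)
        obtain ⟨v, hv⟩ := Set.nonempty_iff_ne_empty.mpr hVne
        have hvT : v ∉ T := fun h' => (Set.eq_empty_iff_forall_notMem.mp hVT v) ⟨hv, h'⟩
        have := h {v} (by intro x hx; rcases hx with rfl; exact hvT)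
        rcases this with heq | ⟨hc, _⟩
        · have : T ⊆ {v} := by
            intro t ht
            have : t ∈ ({v} : Set S) ∪ T := Or.inr ht
            rw [← heq] at this; exact this
          obtain ⟨t, ht⟩ := Set.nonempty_iff_ne_empty.mpr hTne
          have : t = v := this ht
          exact hvT (this ▸ ht)
        · rcases hc with hc | hc
          · exact (Set.eq_empty_iff_forall_notMem.mp hc v) ⟨rfl, hv⟩
          · exact hV ⟨v, Set.Subset.antisymm hc (by simpa using hv)⟩
      · -- take U = ∅
        obtain ⟨w, hwV, hwT⟩ := Set.nonempty_iff_ne_empty.mpr hVT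
        have := h ∅ (Set.empty_subset _)
        rw [Set.empty_union] at this
        rcases this with heq | ⟨_, hc⟩
        · exact hTne heq.symm
        · rcases hc with hc | hc
          · exact (Set.eq_empty_iff_forall_notMem.mp hc w) ⟨hwT, hwV⟩
          · exact hVnT hc
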